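/- Let (v_1,…,v_N,d) be a weight system and let f ∈ ℂ[x_1,…,x_N] be quasihomogeneous with respect to (v_1,…,v_N,d) and nondegenerate. Then the set R = supp(f) ⊆ (ℤ_{≥0}^N)_d of exponent vectors of monomials occurring in f satisfies condition (C1). -/

import Mathlib

open MvPolynomial

/-- The `k`-th standard basis vector `e_k` of `ℤ_{≥0}^N`. -/
def stdBasisVec {N : ℕ} (k : Fin N) : Fin N → ℕ := fun i => if i = k then 1 else 0

/-- The slice `(ℤ_{≥0}^N)_k` of the lattice, with respect to the weights `v`. -/
def latAt {N : ℕ} (v : Fin N → ℕ) (k : ℕ) : Set (Fin N → ℕ) := {α | ∑ i, α i * v i = k}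

/-- `ℤ_{≥0}^J`, the lattice points supported in `J`. -/
def cubeJ {N : ℕ} (J : Finset (Fin N)) : Set (Fin N → ℕ) := {α | ∀ i, i ∉ J → α i = 0}

/-- The set `R_k = {α ∈ (ℤ_{≥0}^N)_{d-v_k} | α + e_k ∈ R}`. -/
def shiftR {N : ℕ} (v : Fin N → ℕ) (d : ℕ) (R : Set (Fin N → ℕ)) (k : Fin N) :
    Set (Fin N → ℕ) :=
  {α | α ∈ latAt v (d - v k) ∧ α + stdBasisVec k ∈ R}

/-- Condition (C1). -/
def CondC1 {N : ℕ} (v : Fin N → ℕ) (d : ℕ) (R : Set (Fin N → ℕ)) : Prop :=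
  ∀ J : Finset (Fin N), J.Nonempty →
    (R ∩ cubeJ J).Nonempty ∨
      ∃ K : Finset (Fin N), K ⊆ Jᶜ ∧ K.card = J.card ∧
        ∀ k ∈ K, (shiftR v d R k ∩ cubeJ J).Nonempty

/-- Condition (C2). -/
def CondC2 {N : ℕ} (v : Fin N → ℕ) (d : ℕ) (R : Set (Fin N → ℕ)) : Prop :=
  ∀ J : Finset (Fin N), J.Nonempty →
    ∃ K : Finset (Fin N), K.card = J.card ∧
      ∀ k ∈ K, (shiftR v d R k ∩ cubeJ J).Nonempty

/-- A polynomial is nondegenerate if the only common zero of all its partial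
derivatives is the origin. -/
def IsNondegenerate {N : ℕ} (f : MvPolynomial (Fin N) ℂ) : Prop :=
  {x : Fin N → ℂ | ∀ i, MvPolynomial.eval x (MvPolynomial.pderiv i f) = 0} = {0}

/-- The support of a polynomial, viewed as a set of exponent vectors in `ℤ_{≥0}^N`. -/
def suppSet {N : ℕ} (f : MvPolynomial (Fin N) ℂ) : Set (Fin N → ℕ) :=
  {α | ∃ m ∈ f.support, ∀ i, m i = α i}

section Aux

open Finsupp

set_option linter.unusedSectionVars false

variable {σ κ : Type*} [Fintype σ] [DecidableEq σ]

lemma wcomp_mul (w : σ → ℕ) {g : MvPolynomial σ ℂ} {Dg n : ℕ}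
    (hg : g.IsWeightedHomogeneous w Dg) (hD : Dg ≤ n) (h : MvPolynomial σ ℂ) :
    weightedHomogeneousComponent w n (h * g) =
      weightedHomogeneousComponent w (n - Dg) h * g := by
  ext μ
  rw [coeff_weightedHomogeneousComponent, coeff_mul, coeff_mul]
  split_ifs with hc
  · refine Finset.sum_congr rfl fun ab hab => ?_
    rw [Finset.HasAntidiagonal.mem_antidiagonal] at hab
    rw [coeff_weightedHomogeneousComponent]
    by_cases hb : coeff ab.2 g = 0
    · simp [hb]
    · have hwb : Finsupp.weight w ab.2 = Dg := hg hb
      have : Finsupp.weight w ab.1 = n - Dg := by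
        have := congrArg (Finsupp.weight w) hab
        rw [map_add, hwb] at this
        omega
      rw [if_pos this]
  · symm
    refine Finset.sum_eq_zero fun ab hab => ?_
    rw [Finset.HasAntidiagonal.mem_antidiagonal] at hab
    rw [coeff_weightedHomogeneousComponent]
    by_cases hb : coeff ab.2 g = 0
    · simp [hb]
    · have hwb : Finsupp.weight w ab.2 = Dg := hg hb
      rw [if_neg, zero_mul]
      intro ha
      apply hc
      have := congrArg (Finsupp.weight w) hab
      rw [map_add, hwb, ha] at this
      omega

/-- The spanning set used in the counting argument. -/
def Sset [Fintype κ] (g : κ → MvPolynomial σ ℂ) (D : κ → ℕ) (w : σ → ℕ) (E t : ℕ) :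
    Set (MvPolynomial σ ℂ) :=
  {p | ∃ (β : κ → ℕ) (μ : σ →₀ ℕ), (∑ k, β k * D k) + Finsupp.weight w μ = t ∧
        (∀ i, μ i < E) ∧ p = (∏ k, g k ^ β k) * monomial μ 1}

lemma key_span [Fintype κ] [DecidableEq κ] (w : σ → ℕ) (hw : ∀ i, 0 < w i)
    (D : κ → ℕ) (hD : ∀ k, 0 < D k) (g : κ → MvPolynomial σ ℂ)
    (E : ℕ) (hE : ∀ k, D k < E)
    (H : σ → κ → MvPolynomial σ ℂ)
    (hH : ∀ i, (X i : MvPolynomial σ ℂ) ^ E = ∑ k, H i k * g k)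
    (hHhom : ∀ i k, (H i k).IsWeightedHomogeneous w (E * w i - D k)) (t : ℕ) :
    ∀ ν : σ →₀ ℕ, Finsupp.weight w ν = t →
      monomial ν (1 : ℂ) ∈ Submodule.span ℂ (Sset g D w E t) := by
  induction t using Nat.strong_induction_on with
  | _ t IH =>
  intro ν hν
  by_cases hsmall : ∀ i, ν i < E
  · exact Submodule.subset_span ⟨0, ν, by simpa using hν, hsmall, by simp⟩
  push_neg at hsmall
  obtain ⟨i, hi⟩ := hsmall
  have hle : Finsupp.single i E ≤ ν := by
    intro j
    rcases eq_or_ne j i with rfl | hj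
    · simpa using hi
    · simp [Finsupp.single_apply, Ne.symm hj]
  set ν' := ν - Finsupp.single i E with hν'def
  have hsplit : ν = Finsupp.single i E + ν' := by
    rw [hν'def, add_tsub_cancel_of_le hle]
  have hwsingle : Finsupp.weight w (Finsupp.single i E) = E * w i := by
    rw [Finsupp.weight_apply, Finsupp.sum_single_index] <;> simp [mul_comm]
  have hwsum : t = E * w i + Finsupp.weight w ν' := by
    rw [← hν, hsplit, map_add, hwsingle]
  have hDle : ∀ k, D k ≤ E * w i := fun k =>
    le_trans (le_of_lt (hE k)) (Nat.le_mul_of_pos_right E (hw i))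
  have hmon : monomial ν (1 : ℂ) = (X i) ^ E * monomial ν' 1 := by
    rw [X_pow_eq_monomial, monomial_mul, one_mul, ← hsplit]
  rw [hmon, hH i, Finset.sum_mul]
  apply Submodule.sum_mem
  intro k _
  have hrearr : H i k * g k * monomial ν' (1 : ℂ) = g k * (H i k * monomial ν' 1) := by ring
  rw [hrearr]
  set p := H i k * monomial ν' (1 : ℂ) with hpdef
  have hphom : p.IsWeightedHomogeneous w (t - D k) := by
    have := (hHhom i k).mul (isWeightedHomogeneous_monomial w ν' (1 : ℂ) rfl)
    have harith : E * w i - D k + Finsupp.weight w ν' = t - D k := by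
      have := hDle k; omega
    rwa [harith] at this
  have hppsum : g k * p = ∑ μ' ∈ p.support, coeff μ' p • (g k * monomial μ' 1) := by
    conv_lhs => rw [← support_sum_monomial_coeff p]
    rw [Finset.mul_sum]
    refine Finset.sum_congr rfl fun μ' _ => ?_
    rw [smul_eq_C_mul, mul_left_comm, C_mul_monomial, mul_one]
  rw [hppsum]
  refine Submodule.sum_mem _ fun μ' hμ' => Submodule.smul_mem _ _ ?_
  have hμ'w : Finsupp.weight w μ' = t - D k := hphom (MvPolynomial.mem_support_iff.mp hμ')
  have hlt : t - D k < t := by have h1 := hDle k; have h2 := hD k; omega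
  have h1 : monomial μ' (1 : ℂ) ∈ Submodule.span ℂ (Sset g D w E (t - D k)) :=
    IH _ hlt μ' hμ'w
  have h2 : g k * monomial μ' (1 : ℂ) ∈
      Submodule.map (LinearMap.mulLeft ℂ (g k)) (Submodule.span ℂ (Sset g D w E (t - D k))) :=
    ⟨_, h1, rfl⟩
  rw [Submodule.map_span] at h2
  refine Submodule.span_mono ?_ h2
  rintro _ ⟨q, ⟨β, μ, hsum, hμ, rfl⟩, rfl⟩
  refine ⟨fun j => β j + if j = k then 1 else 0, μ, ?_, hμ, ?_⟩
  · have hs : ∑ j, (β j + if j = k then 1 else 0) * D j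
        = (∑ j, β j * D j) + D k := by
      simp only [add_mul, Finset.sum_add_distrib, ite_mul, one_mul, zero_mul]
      rw [Finset.sum_ite_eq' Finset.univ k D]
      simp
    rw [hs]
    have h3 := hDle k
    omega
  · have hup : ∏ j, g j ^ (β j + if j = k then 1 else 0) = g k * ∏ j, g j ^ β j := by
      simp only [pow_add, Finset.prod_mul_distrib, pow_ite, pow_one, pow_zero]
      rw [Finset.prod_ite_eq' Finset.univ k g]
      simp [mul_comm]
    simp only [LinearMap.mulLeft_apply, hup]
    ring

set_option maxHeartbeats 1000000 in
lemma key_exists {σ κ : Type*} [Fintype σ] [Fintype κ] [DecidableEq σ] [DecidableEq κ]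
    (hcard : Fintype.card κ < Fintype.card σ)
    (w : σ → ℕ) (hw : ∀ i, 0 < w i) (D : κ → ℕ) (hD : ∀ k, 0 < D k)
    (g : κ → MvPolynomial σ ℂ) (hg : ∀ k, (g k).IsWeightedHomogeneous w (D k)) :
    ∃ y : σ → ℂ, y ≠ 0 ∧ ∀ k, eval y (g k) = 0 := by
  by_contra hcon
  push_neg at hcon
  set I : Ideal (MvPolynomial σ ℂ) := Ideal.span (Set.range g) with hIdef
  -- every element of the ideal vanishes at 0
  have heval0 : ∀ p ∈ I, eval (0 : σ → ℂ) p = 0 := by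
    intro p hp
    have : I ≤ RingHom.ker (eval (0 : σ → ℂ)) := by
      rw [hIdef, Ideal.span_le]
      rintro _ ⟨k, rfl⟩
      rw [SetLike.mem_coe, RingHom.mem_ker]
      -- eval 0 (g k) = constant coeff = 0 since g k is w-homogeneous of positive degree
      have h0 : coeff 0 (g k) = 0 := by
        by_contra hne
        have := hg k hne
        rw [map_zero] at this
        exact (hD k).ne' this.symm
      rw [eval_eq]
      refine Finset.sum_eq_zero fun μ hμ => ?_
      rcases eq_or_ne μ 0 with rfl | hne
      · exact absurd h0 (MvPolynomial.mem_support_iff.mp hμ)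
      · obtain ⟨i, hi⟩ := Finsupp.ne_iff.mp hne
        simp only [Finsupp.coe_zero, Pi.zero_apply] at hi
        rw [Finset.prod_eq_zero (Finsupp.mem_support_iff.mpr hi)
          (by simp [zero_pow hi]), mul_zero]
    exact RingHom.mem_ker.mp (this hp)
  -- the zero locus is {0}
  have hzl : MvPolynomial.zeroLocus ℂ I ⊆ {0} := by
    intro x hx
    by_contra hxne
    obtain ⟨k, hk⟩ := hcon x hxne
    exact hk (hx (g k) (Ideal.subset_span ⟨k, rfl⟩))
  -- Nullstellensatz: each X i is in the radical
  have hrad : ∀ i, (X i : MvPolynomial σ ℂ) ∈ I.radical := by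
    intro i
    rw [← MvPolynomial.vanishingIdeal_zeroLocus_eq_radical (K := ℂ)]
    intro x hx
    have : x = 0 := hzl hx
    subst this
    simp
  choose e he using fun i => hrad i
  set E : ℕ := (Finset.univ.sup e) + (Finset.univ.sup D) + 1 with hEdef
  have hEe : ∀ i, e i ≤ E := fun i =>
    le_trans (Finset.le_sup (f := e) (Finset.mem_univ i)) (by omega)
  have hED : ∀ k, D k < E := fun k =>
    lt_of_le_of_lt (Finset.le_sup (f := D) (Finset.mem_univ k)) (by omega)
  have hXE : ∀ i, (X i : MvPolynomial σ ℂ) ^ E ∈ I := by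
    intro i
    have : (X i : MvPolynomial σ ℂ) ^ E = X i ^ e i * X i ^ (E - e i) := by
      rw [← pow_add]; congr 1; have := hEe i; omega
    rw [this]
    exact I.mul_mem_right _ (he i)
  -- representation with weighted homogeneous coefficients
  have hrep : ∀ i, ∃ c : κ → MvPolynomial σ ℂ, ∑ k, c k * g k = X i ^ E := by
    intro i
    have := hXE i
    rw [hIdef, Ideal.span, Submodule.mem_span_range_iff_exists_fun] at this
    obtain ⟨c, hc⟩ := this
    exact ⟨c, by simpa [smul_eq_mul] using hc⟩
  choose c hc using hrep
  have hDle : ∀ i k, D k ≤ E * w i := fun i k =>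
    le_trans (le_of_lt (hED k)) (Nat.le_mul_of_pos_right E (hw i))
  set H : σ → κ → MvPolynomial σ ℂ :=
    fun i k => weightedHomogeneousComponent w (E * w i - D k) (c i k) with hHdef
  have hXhom : ∀ i, ((X i : MvPolynomial σ ℂ) ^ E).IsWeightedHomogeneous w (E * w i) := by
    intro i
    rw [X_pow_eq_monomial]
    refine isWeightedHomogeneous_monomial w _ _ ?_
    rw [Finsupp.weight_apply, Finsupp.sum_single_index] <;> simp [mul_comm]
  have hH : ∀ i, (X i : MvPolynomial σ ℂ) ^ E = ∑ k, H i k * g k := by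
    intro i
    conv_lhs => rw [← (hXhom i).weightedHomogeneousComponent_same, ← hc i]
    rw [map_sum]
    refine Finset.sum_congr rfl fun k _ => ?_
    rw [wcomp_mul w (hg k) (hDle i k)]
  have hHhom : ∀ i k, (H i k).IsWeightedHomogeneous w (E * w i - D k) := fun i k =>
    weightedHomogeneousComponent_isWeightedHomogeneous _ _
  -- counting setup
  set n := Fintype.card σ with hndef
  set m := Fintype.card κ with hmdef
  set W : ℕ := ∑ i, w i with hWdef
  have hW1 : 1 ≤ W := by
    have : 0 < n := lt_of_le_of_lt (Nat.zero_le m) hcard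
    obtain ⟨i⟩ := Fintype.card_pos_iff.mp this
    calc 1 ≤ w i := hw i
    _ ≤ W := Finset.single_le_sum (f := w) (fun j _ => Nat.zero_le _) (Finset.mem_univ i)
  have hE1 : 1 ≤ E := by omega
  set q : ℕ := E ^ n * W ^ m with hqdef
  have hq1 : 1 ≤ q := Nat.one_le_iff_ne_zero.mpr (by positivity)
  set t : ℕ := q * W with htdef
  -- the finite spanning set
  set F : (κ → ℕ) × (σ → ℕ) → MvPolynomial σ ℂ :=
    fun bm => (∏ k, g k ^ bm.1 k) * monomial (Finsupp.equivFunOnFinite.symm bm.2) 1 with hFdef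
  set P : Finset ((κ → ℕ) × (σ → ℕ)) :=
    (Fintype.piFinset fun _ : κ => Finset.range (t + 1)) ×ˢ
      (Fintype.piFinset fun _ : σ => Finset.range E) with hPdef
  set T : Finset (MvPolynomial σ ℂ) := P.image F with hTdef
  -- all small monomials are in the span of T
  have hmemT : ∀ b : σ → Fin (q + 1),
      monomial (Finsupp.equivFunOnFinite.symm fun i => (b i : ℕ)) (1 : ℂ) ∈
        Submodule.span ℂ (T : Set (MvPolynomial σ ℂ)) := by
    intro b
    set ν : σ →₀ ℕ := Finsupp.equivFunOnFinite.symm fun i => (b i : ℕ) with hνdef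
    set s : ℕ := Finsupp.weight w ν with hsdef
    have hst : s ≤ t := by
      rw [hsdef, Finsupp.weight_apply, Finsupp.sum_fintype _ _ (fun i => by simp)]
      calc ∑ i, ν i • w i ≤ ∑ i, q * w i := by
            refine Finset.sum_le_sum fun i _ => ?_
            rw [smul_eq_mul]
            exact Nat.mul_le_mul_right _ (Nat.lt_succ_iff.mp (b i).isLt)
      _ = t := by rw [htdef, Finset.mul_sum]
    have hsp := key_span w hw D hD g E hED H hH hHhom s ν rfl
    refine Submodule.span_mono ?_ hsp
    rintro _ ⟨β, μ, hsum, hμ, rfl⟩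
    have hmemP : (β, fun i => μ i) ∈ P := by
      rw [hPdef, Finset.mem_product]
      constructor
      · rw [Fintype.mem_piFinset]
        intro k
        rw [Finset.mem_range]
        show β k < t + 1
        have h1 : β k ≤ β k * D k := Nat.le_mul_of_pos_right _ (hD k)
        have h3 : β k * D k ≤ ∑ j, β j * D j :=
          Finset.single_le_sum (f := fun j => β j * D j)
            (fun j _ => Nat.zero_le _) (Finset.mem_univ k)
        have h4 : ∑ j, β j * D j ≤ t := le_trans (by omega) hst
        omega
      · rw [Fintype.mem_piFinset]
        intro i
        rw [Finset.mem_range]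
        show μ i < E
        exact hμ i
    refine Finset.mem_coe.mpr (Finset.mem_image.mpr ⟨(β, fun i => μ i), hmemP, ?_⟩)
    rw [hFdef]
    simp [Finsupp.equivFunOnFinite_symm_coe]
  -- linear independence of the small monomials
  have hinj : Function.Injective
      (fun b : σ → Fin (q + 1) => (Finsupp.equivFunOnFinite.symm fun i => ((b i : ℕ)))) := by
    intro b b' hbb
    have := Finsupp.equivFunOnFinite.symm.injective hbb
    funext i
    exact Fin.ext (congrFun this i)
  have hli : LinearIndependent ℂ
      (fun b : σ → Fin (q + 1) =>
        monomial (Finsupp.equivFunOnFinite.symm fun i => ((b i : ℕ))) (1 : ℂ)) := by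
    have h := (basisMonomials σ ℂ).linearIndependent
    have hcoe := coe_basisMonomials σ ℂ
    have h2 := h.comp _ hinj
    simpa [hcoe, Function.comp_def] using h2
  set V := Submodule.span ℂ (T : Set (MvPolynomial σ ℂ)) with hVdef
  haveI : FiniteDimensional ℂ V := FiniteDimensional.span_finset ℂ T
  set v : (σ → Fin (q + 1)) → V := fun b => ⟨_, hmemT b⟩ with hvdef
  have hliv : LinearIndependent ℂ v := by
    apply LinearIndependent.of_comp V.subtype
    exact hli
  have hcard1 : Fintype.card (σ → Fin (q + 1)) ≤ Module.finrank ℂ V :=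
    hliv.fintype_card_le_finrank
  have hcard2 : Fintype.card (σ → Fin (q + 1)) = (q + 1) ^ n := by
    rw [Fintype.card_fun, Fintype.card_fin]
  have hrankV : Module.finrank ℂ V ≤ T.card := by
    have := finrank_span_finset_le_card (R := ℂ) T
    rwa [Set.finrank] at this
  have hTP : T.card ≤ (t + 1) ^ m * E ^ n := by
    calc T.card ≤ P.card := Finset.card_image_le
    _ = (t + 1) ^ m * E ^ n := by
        rw [hPdef, Finset.card_product, Fintype.card_piFinset, Fintype.card_piFinset]
        simp [Finset.card_range, hmdef, hndef]
  have hfinal : (q + 1) ^ n ≤ (t + 1) ^ m * E ^ n := by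
    rw [← hcard2]
    exact le_trans hcard1 (le_trans hrankV hTP)
  -- derive numerical contradiction
  have h5 : t + 1 ≤ (q + 1) * W := by
    rw [htdef]
    calc q * W + 1 ≤ q * W + W := by omega
    _ = (q + 1) * W := by ring
  have h6 : (t + 1) ^ m ≤ ((q + 1) * W) ^ m := Nat.pow_le_pow_left h5 m
  have h7 : ((q + 1) * W) ^ m * E ^ n = (q + 1) ^ m * q := by
    rw [mul_pow, hqdef]; ring
  have h8 : (q + 1) ^ (m + 1) ≤ (q + 1) ^ n := Nat.pow_le_pow_right (by omega) (by omega)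
  have h9 : (q + 1) ^ m * (q + 1) ≤ (q + 1) ^ m * q := by
    calc (q + 1) ^ m * (q + 1) = (q + 1) ^ (m + 1) := by ring
    _ ≤ (q + 1) ^ n := h8
    _ ≤ (t + 1) ^ m * E ^ n := hfinal
    _ ≤ ((q + 1) * W) ^ m * E ^ n := Nat.mul_le_mul_right _ h6
    _ = (q + 1) ^ m * q := h7
  have h10 := Nat.le_of_mul_le_mul_left h9 (by positivity)
  omega


/-- Restriction to the variables in `J` (other variables set to `0`). -/
noncomputable def restrictHom {N : ℕ} (J : Finset (Fin N)) :
    MvPolynomial (Fin N) ℂ →ₐ[ℂ] MvPolynomial {i : Fin N // i ∈ J} ℂ :=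
  aeval (fun i => if h : i ∈ J then X ⟨i, h⟩ else 0)

lemma restrict_monomial_zero {N : ℕ} (J : Finset (Fin N)) (α : Fin N →₀ ℕ) (c : ℂ)
    (i0 : Fin N) (hi0J : i0 ∉ J) (hne : α i0 ≠ 0) :
    restrictHom J (monomial α c) = 0 := by
  rw [restrictHom, aeval_monomial]
  rw [Finsupp.prod, Finset.prod_eq_zero (Finsupp.mem_support_iff.mpr hne)
    (by rw [dif_neg hi0J, zero_pow hne]), mul_zero]

lemma restrict_monomial_eq {N : ℕ} (J : Finset (Fin N)) (α : Fin N →₀ ℕ) (c : ℂ)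
    (hα : ∀ i, i ∉ J → α i = 0) :
    restrictHom J (monomial α c) = monomial (α.subtypeDomain (· ∈ J)) c := by
  have hmem : ∀ i ∈ α.support, i ∈ J := fun i hi => by
    by_contra h
    exact Finsupp.mem_support_iff.mp hi (hα i h)
  rw [restrictHom, aeval_monomial, monomial_eq, algebraMap_eq]
  congr 1
  have h2 := Finsupp.prod_subtypeDomain_index (p := fun i : Fin N => i ∈ J)
    (v := α) (h := fun (i : Fin N) (k : ℕ) =>
      if h : i ∈ J then (X ⟨i, h⟩ : MvPolynomial {i : Fin N // i ∈ J} ℂ) ^ k else 1) hmem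
  have h1 : α.prod (fun i k =>
        (if h : i ∈ J then (X ⟨i, h⟩ : MvPolynomial {i : Fin N // i ∈ J} ℂ) else 0) ^ k)
      = α.prod (fun i k =>
        if h : i ∈ J then (X ⟨i, h⟩ : MvPolynomial {i : Fin N // i ∈ J} ℂ) ^ k else 1) :=
    Finsupp.prod_congr fun i hi => by rw [dif_pos (hmem i hi), dif_pos (hmem i hi)]
  have h3 : (α.subtypeDomain (· ∈ J)).prod
        (fun (j : {i : Fin N // i ∈ J}) (k : ℕ) => (X j : MvPolynomial {i : Fin N // i ∈ J} ℂ) ^ k)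
      = (α.subtypeDomain (· ∈ J)).prod (fun (j : {i : Fin N // i ∈ J}) (k : ℕ) =>
          (fun (i : Fin N) (k : ℕ) =>
            if h : i ∈ J then (X ⟨i, h⟩ : MvPolynomial {i : Fin N // i ∈ J} ℂ) ^ k else 1)
            (j : Fin N) k) :=
    Finsupp.prod_congr fun j hj => by simp only [dif_pos j.2, Subtype.coe_eta]
  rw [h1, h3, h2]

lemma weight_subtypeDomain {N : ℕ} (J : Finset (Fin N)) (v : Fin N → ℕ) (β : Fin N →₀ ℕ)
    (hβ : ∀ i, i ∉ J → β i = 0) :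
    Finsupp.weight (fun j : {i : Fin N // i ∈ J} => v j) (β.subtypeDomain (· ∈ J))
      = ∑ i, β i * v i := by
  have hmem : ∀ i ∈ β.support, i ∈ J := fun i hi => by
    by_contra h
    exact Finsupp.mem_support_iff.mp hi (hβ i h)
  rw [Finsupp.weight_apply]
  have h2 := Finsupp.sum_subtypeDomain_index (p := fun i : Fin N => i ∈ J)
    (v := β) (h := fun (i : Fin N) (k : ℕ) => k • v i) hmem
  rw [h2, Finsupp.sum_fintype _ _ (fun i => by simp)]
  simp [smul_eq_mul]

lemma sum_sub_single {N : ℕ} (α m : Fin N →₀ ℕ) (v : Fin N → ℕ) (k : Fin N)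
    (hm : m = α - Finsupp.single k 1) (hk : 1 ≤ α k) :
    ∑ i, m i * v i + v k = ∑ i, α i * v i := by
  rw [Finset.sum_eq_sum_sdiff_singleton_add (Finset.mem_univ k) (fun i => m i * v i),
    Finset.sum_eq_sum_sdiff_singleton_add (Finset.mem_univ k) (fun i => α i * v i)]
  have h1 : ∀ i ∈ Finset.univ \ {k}, m i * v i = α i * v i := by
    intro i hi
    have hik : i ≠ k := by simpa using (Finset.mem_sdiff.mp hi).2
    rw [hm, Finsupp.tsub_apply, Finsupp.single_apply, if_neg (Ne.symm hik), Nat.sub_zero]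
  rw [Finset.sum_congr rfl h1, hm, Finsupp.tsub_apply, Finsupp.single_apply, if_pos rfl]
  have h2 : (α k - 1) * v k + v k = α k * v k := by
    obtain ⟨mm, hmm⟩ := Nat.exists_eq_add_of_le hk
    rw [hmm, Nat.add_sub_cancel_left]
    ring
  omega

lemma restrict_pderiv_mem_eq_zero {N : ℕ} (J : Finset (Fin N)) (f : MvPolynomial (Fin N) ℂ)
    {j : Fin N} (hj : j ∈ J) (hempty : ¬(suppSet f ∩ cubeJ J).Nonempty) :
    restrictHom J (pderiv j f) = 0 := by
  conv_lhs => rw [← support_sum_monomial_coeff f]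
  rw [map_sum, map_sum]
  refine Finset.sum_eq_zero fun α hα => ?_
  rw [pderiv_monomial]
  by_cases hαj : α j = 0
  · rw [hαj]
    simp
  by_cases hsupp : ∀ i, i ∉ J → α i = 0
  · exact absurd ⟨⇑α, ⟨α, hα, fun i => rfl⟩, hsupp⟩ hempty
  · push_neg at hsupp
    obtain ⟨i0, hi0J, hi0⟩ := hsupp
    refine restrict_monomial_zero J _ _ i0 hi0J ?_
    have hij : i0 ≠ j := fun h => hi0J (h ▸ hj)
    rw [Finsupp.tsub_apply, Finsupp.single_apply, if_neg (Ne.symm hij), Nat.sub_zero]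
    exact hi0

lemma restrict_pderiv_notmem_eq_zero {N : ℕ} (J : Finset (Fin N)) (v : Fin N → ℕ) (d : ℕ)
    (f : MvPolynomial (Fin N) ℂ) (hqh : ∀ m ∈ f.support, ∑ i, m i * v i = d)
    {k : Fin N} (hk : k ∉ J)
    (hempty : ¬(shiftR v d (suppSet f) k ∩ cubeJ J).Nonempty) :
    restrictHom J (pderiv k f) = 0 := by
  conv_lhs => rw [← support_sum_monomial_coeff f]
  rw [map_sum, map_sum]
  refine Finset.sum_eq_zero fun α hα => ?_
  rw [pderiv_monomial]
  by_cases hαk : α k = 0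
  · rw [hαk]
    simp
  have hαk1 : 1 ≤ α k := Nat.one_le_iff_ne_zero.mpr hαk
  set m : Fin N →₀ ℕ := α - Finsupp.single k 1 with hm
  by_cases hsupp : ∀ i, i ∉ J → m i = 0
  · exfalso
    apply hempty
    refine ⟨⇑m, ⟨?_, ?_⟩, hsupp⟩
    · show ∑ i, m i * v i = d - v k
      have h1 := sum_sub_single α m v k hm hαk1
      have h2 := hqh α hα
      omega
    · refine ⟨α, hα, fun i => ?_⟩
      show α i = m i + stdBasisVec k i
      rw [hm, Finsupp.tsub_apply, Finsupp.single_apply, stdBasisVec]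
      rcases eq_or_ne i k with rfl | hik
      · simp only [if_pos rfl, eq_self_iff_true, if_true]
        omega
      · simp only [if_neg (Ne.symm hik), if_neg hik]
        omega
  · push_neg at hsupp
    obtain ⟨i0, hi0J, hi0⟩ := hsupp
    exact restrict_monomial_zero J _ _ i0 hi0J hi0

lemma restrict_pderiv_homog {N : ℕ} (J : Finset (Fin N)) (v : Fin N → ℕ) (d : ℕ)
    (f : MvPolynomial (Fin N) ℂ) (hqh : ∀ m ∈ f.support, ∑ i, m i * v i = d) (k : Fin N) :
    (restrictHom J (pderiv k f)).IsWeightedHomogeneous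
      (fun j : {i : Fin N // i ∈ J} => v j) (d - v k) := by
  have hrw : restrictHom J (pderiv k f)
      = ∑ α ∈ f.support, restrictHom J (pderiv k (monomial α (coeff α f))) := by
    rw [← map_sum, ← map_sum, support_sum_monomial_coeff]
  rw [hrw]
  refine IsWeightedHomogeneous.sum _ _ _ fun α hα => ?_
  rw [pderiv_monomial]
  by_cases hαk : α k = 0
  · rw [hαk]
    simp only [Nat.cast_zero, mul_zero, monomial_zero, map_zero]
    exact isWeightedHomogeneous_zero _ _ _
  have hαk1 : 1 ≤ α k := Nat.one_le_iff_ne_zero.mpr hαk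
  set m : Fin N →₀ ℕ := α - Finsupp.single k 1 with hm
  by_cases hsupp : ∀ i, i ∉ J → m i = 0
  · rw [restrict_monomial_eq J _ _ hsupp]
    refine isWeightedHomogeneous_monomial _ _ _ ?_
    rw [weight_subtypeDomain J v _ hsupp]
    have h1 := sum_sub_single α m v k hm hαk1
    have h2 := hqh α hα
    omega
  · push_neg at hsupp
    obtain ⟨i0, hi0J, hi0⟩ := hsupp
    rw [restrict_monomial_zero J _ _ i0 hi0J hi0]
    exact isWeightedHomogeneous_zero _ _ _

lemma eval_restrict {N : ℕ} (J : Finset (Fin N)) (y : {i : Fin N // i ∈ J} → ℂ)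
    (p : MvPolynomial (Fin N) ℂ) :
    eval (fun i => if h : i ∈ J then y ⟨i, h⟩ else 0) p = eval y (restrictHom J p) := by
  induction p using MvPolynomial.induction_on with
  | C a => simp [restrictHom]
  | add p q hp hq => rw [map_add, map_add, map_add, hp, hq]
  | mul_X p i hp =>
    rw [map_mul, map_mul, map_mul, hp, restrictHom, aeval_X]
    congr 1
    rw [eval_X]
    split_ifs with h
    · rw [eval_X]
    · rw [map_zero]

end Aux

/-- If `f` is quasihomogeneous with respect to the weight system `(v_1,…,v_N,d)` and
nondegenerate, then `R = supp f` satisfies condition (C1). -/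
theorem suppSet_condC1_of_nondegenerate (N : ℕ) (hN : 1 ≤ N) (v : Fin N → ℕ) (d : ℕ)
    (hv : ∀ i, 0 < v i) (hvd : ∀ i, v i < d)
    (f : MvPolynomial (Fin N) ℂ)
    (hqh : ∀ m ∈ f.support, ∑ i, m i * v i = d)
    (hnd : IsNondegenerate f) :
    CondC1 v d (suppSet f) := by
  classical
  intro J hJ
  by_cases hR : (suppSet f ∩ cubeJ J).Nonempty
  · exact Or.inl hR
  right
  set K₀ : Finset (Fin N) := Finset.univ.filter
    (fun k => k ∉ J ∧ (shiftR v d (suppSet f) k ∩ cubeJ J).Nonempty) with hK₀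
  by_cases hK : J.card ≤ K₀.card
  · obtain ⟨K, hKsub, hKcard⟩ := Finset.exists_subset_card_eq hK
    refine ⟨K, ?_, hKcard, ?_⟩
    · intro k hk
      have h := hKsub hk
      rw [hK₀, Finset.mem_filter] at h
      exact Finset.mem_compl.mpr h.2.1
    · intro k hk
      have h := hKsub hk
      rw [hK₀, Finset.mem_filter] at h
      exact h.2.2
  exfalso
  push_neg at hK
  -- set up the data for key_exists
  have hcard : Fintype.card {k : Fin N // k ∈ K₀} < Fintype.card {i : Fin N // i ∈ J} := by
    rw [Fintype.card_coe, Fintype.card_coe]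
    exact hK
  obtain ⟨y, hy0, hyz⟩ := key_exists hcard
    (fun j : {i : Fin N // i ∈ J} => v j) (fun j => hv j)
    (fun k : {k : Fin N // k ∈ K₀} => d - v k)
    (fun k => by show 0 < d - v (k : Fin N); have := hvd (k : Fin N); omega)
    (fun k : {k : Fin N // k ∈ K₀} => restrictHom J (pderiv (k : Fin N) f))
    (fun k => restrict_pderiv_homog J v d f hqh k)
  set x : Fin N → ℂ := fun i => if h : i ∈ J then y ⟨i, h⟩ else 0 with hxdef
  have hx0 : x ≠ 0 := by
    intro hx
    apply hy0
    funext j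
    have := congrFun hx (j : Fin N)
    rw [hxdef] at this
    simpa [dif_pos j.2] using this
  have hall : ∀ i, eval x (pderiv i f) = 0 := by
    intro i
    rw [hxdef, eval_restrict J y (pderiv i f)]
    by_cases hiJ : i ∈ J
    · rw [restrict_pderiv_mem_eq_zero J f hiJ hR, map_zero]
    by_cases hiK : i ∈ K₀
    · exact hyz ⟨i, hiK⟩
    · have hempty : ¬(shiftR v d (suppSet f) i ∩ cubeJ J).Nonempty := by
        intro hne
        exact hiK (by rw [hK₀, Finset.mem_filter]; exact ⟨Finset.mem_univ i, hiJ, hne⟩)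
      rw [restrict_pderiv_notmem_eq_zero J v d f hqh hiJ hempty, map_zero]
  have hxin : x ∈ {x : Fin N → ℂ | ∀ i, MvPolynomial.eval x (MvPolynomial.pderiv i f) = 0} :=
    hall
  rw [hnd] at hxin
  exact hx0 hxin
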